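/- Let k ≥ 1 be an integer, z_j := exp(2πij/k) for j = 0, ..., k−1 the kth roots of unity, and let b_0, ..., b_{k−1} be nonzero real numbers. Then Q(z) := Σ_{j=0}^{k−1} b_j z^j satisfies Re(Q(z_j)) ≠ 0 for at least one j ∈ {0, 1, ..., k−1}. -/

import Mathlib

/-- If all coefficients `b_0, …, b_{k-1}` are nonzero reals, then `Re(Q(z_j)) ≠ 0` for some
`k`-th root of unity `z_j = exp(2πij/k)`. -/
theorem exists_root_of_unity_re_ne_zero (k : ℕ) (hk : 1 ≤ k) (b : Fin k → ℝ)
    (hb : ∀ j, b j ≠ 0) :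
    ∃ j : Fin k,
      (∑ i : Fin k, (b i : ℂ) *
        Complex.exp (2 * (Real.pi : ℂ) * Complex.I * ((j : ℕ) : ℂ) / (k : ℂ)) ^ (i : ℕ)).re ≠ 0 := by
  by_contra h
  push_neg at h
  have hkne : k ≠ 0 := by omega
  set ζ : ℂ := Complex.exp (2 * Real.pi * Complex.I / k) with hζdef
  have hζ : IsPrimitiveRoot ζ k := Complex.isPrimitiveRoot_exp k hkne
  have key : ∀ j : Fin k,
      Complex.exp (2 * (Real.pi : ℂ) * Complex.I * ((j : ℕ) : ℂ) / (k : ℂ)) = ζ ^ (j : ℕ) := by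
    intro j
    rw [hζdef, ← Complex.exp_nat_mul]
    ring_nf
  have hsum : ∀ i : Fin k, ∑ j : Fin k, (ζ ^ (j : ℕ)) ^ (i : ℕ)
      = if (i : ℕ) = 0 then (k : ℂ) else 0 := by
    intro i
    split_ifs with hi
    · simp [hi]
    · have h1 : ζ ^ (i : ℕ) ≠ 1 :=
        hζ.pow_ne_one_of_pos_of_lt hi i.isLt
      have h2 : (ζ ^ (i : ℕ)) ^ k = 1 := by
        rw [← pow_mul, mul_comm, pow_mul, hζ.pow_eq_one, one_pow]
      calc ∑ j : Fin k, (ζ ^ (j : ℕ)) ^ (i : ℕ)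
          = ∑ j ∈ Finset.range k, (ζ ^ (i : ℕ)) ^ j := by
            rw [← Fin.sum_univ_eq_sum_range]
            exact Finset.sum_congr rfl fun j _ => by rw [← pow_mul, ← pow_mul, mul_comm]
        _ = ((ζ ^ (i : ℕ)) ^ k - 1) / (ζ ^ (i : ℕ) - 1) := geom_sum_eq h1 k
        _ = 0 := by rw [h2]; simp
  have H : ∑ j : Fin k, ∑ i : Fin k, (b i : ℂ) * (ζ ^ (j : ℕ)) ^ (i : ℕ)
      = (b ⟨0, hk⟩ : ℂ) * k := by
    rw [Finset.sum_comm]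
    have : ∀ i : Fin k, ∑ j : Fin k, (b i : ℂ) * (ζ ^ (j : ℕ)) ^ (i : ℕ)
        = (b i : ℂ) * (if (i : ℕ) = 0 then (k : ℂ) else 0) := by
      intro i; rw [← Finset.mul_sum, hsum i]
    rw [Finset.sum_congr rfl fun i _ => this i]
    rw [Finset.sum_eq_single (⟨0, hk⟩ : Fin k)]
    · simp
    · intro i _ hi
      have hi' : (i : ℕ) ≠ 0 := fun h' => hi (Fin.ext h')
      simp [hi']
    · intro h'; exact absurd (Finset.mem_univ _) h'
  have hre : (∑ j : Fin k, ∑ i : Fin k, (b i : ℂ) * (ζ ^ (j : ℕ)) ^ (i : ℕ)).re = 0 := by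
    rw [Complex.re_sum]
    refine Finset.sum_eq_zero fun j _ => ?_
    have := h j
    simp_rw [key j] at this
    exact this
  rw [H] at hre
  have : (b ⟨0, hk⟩ : ℝ) * k = 0 := by
    simpa using hre
  exact hb ⟨0, hk⟩ (by
    have : (b ⟨0, hk⟩ : ℝ) = 0 := by
      rcases mul_eq_zero.mp this with h' | h'
      · exact h'
      · exact absurd h' (by exact_mod_cast hkne)
    exact this)
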